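/- For any X ∈ ℝ^{2n×m} and Y = [X J_{2n} X], if u is an eigenvector of Y Y^T with eigenvalue σ, then J_{2n}^T u is also an eigenvector of Y Y^T with the same eigenvalue σ. -/

import Mathlib

open Matrix

/-- The Poisson matrix `J_{2n} = [[0, I_n], [-I_n, 0]]`. -/
def PoissonMatrix (n : ℕ) : Matrix (Fin n ⊕ Fin n) (Fin n ⊕ Fin n) ℝ :=
  Matrix.fromBlocks 0 1 (-1) 0

lemma PoissonMatrix_transpose (n : ℕ) : (PoissonMatrix n)ᵀ = -(PoissonMatrix n) := by
  simp [PoissonMatrix, fromBlocks_transpose, fromBlocks_neg]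

lemma PoissonMatrix_mul_self (n : ℕ) : PoissonMatrix n * PoissonMatrix n = -1 := by
  simp [PoissonMatrix, fromBlocks_multiply, ← fromBlocks_one, fromBlocks_neg]

lemma PoissonMatrix_commute (n : ℕ) (X : Matrix (Fin n ⊕ Fin n) (Fin m) ℝ) :
    (PoissonMatrix n)ᵀ * (Matrix.fromCols X (PoissonMatrix n * X) *
        (Matrix.fromCols X (PoissonMatrix n * X))ᵀ) =
    (Matrix.fromCols X (PoissonMatrix n * X) *
        (Matrix.fromCols X (PoissonMatrix n * X))ᵀ) * (PoissonMatrix n)ᵀ := by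
  set J := PoissonMatrix n
  have h1 : Jᵀ = -J := PoissonMatrix_transpose n
  have h2 : J * J = -1 := PoissonMatrix_mul_self n
  have hY : Matrix.fromCols X (J * X) * (Matrix.fromCols X (J * X))ᵀ
      = X * Xᵀ + J * (X * Xᵀ) * Jᵀ := by
    rw [transpose_fromCols, fromCols_mul_fromRows, transpose_mul]
    simp only [Matrix.mul_assoc]
  rw [hY, h1]
  noncomm_ring
  rw [← mul_assoc J J (X * Xᵀ * J), h2]
  noncomm_ring

/-- If `u` is an eigenvector of `Y Yᵀ` (for `Y = [X  J_{2n} X]`) with eigenvalue `σ`,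
then so is `J_{2n}ᵀ u`, with the same eigenvalue. -/
theorem rotated_eigenvector (n m : ℕ)
    (X : Matrix (Fin n ⊕ Fin n) (Fin m) ℝ)
    (u : (Fin n ⊕ Fin n) → ℝ) (σ : ℝ) (hu : u ≠ 0)
    (heig : (Matrix.fromCols X (PoissonMatrix n * X) *
        (Matrix.fromCols X (PoissonMatrix n * X))ᵀ) *ᵥ u = σ • u) :
    (Matrix.fromCols X (PoissonMatrix n * X) *
        (Matrix.fromCols X (PoissonMatrix n * X))ᵀ) *ᵥ ((PoissonMatrix n)ᵀ *ᵥ u) =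
      σ • ((PoissonMatrix n)ᵀ *ᵥ u) ∧ (PoissonMatrix n)ᵀ *ᵥ u ≠ 0 := by
  set J := PoissonMatrix n
  set M := Matrix.fromCols X (J * X) * (Matrix.fromCols X (J * X))ᵀ
  constructor
  · have := PoissonMatrix_commute n X
    calc M *ᵥ (Jᵀ *ᵥ u) = (M * Jᵀ) *ᵥ u := by rw [mulVec_mulVec]
    _ = (Jᵀ * M) *ᵥ u := by rw [this]
    _ = Jᵀ *ᵥ (M *ᵥ u) := by rw [mulVec_mulVec]
    _ = σ • (Jᵀ *ᵥ u) := by rw [heig, mulVec_smul]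
  · intro h
    apply hu
    have : (J * Jᵀ) *ᵥ u = 0 := by rw [← mulVec_mulVec, h, mulVec_zero]
    rwa [PoissonMatrix_transpose, mul_neg, PoissonMatrix_mul_self, neg_neg, one_mulVec] at this
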